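/- If γ is a variogram on ℝ^d bounded above by a constant M, then for all ξ, η ∈ ℝ^d, |γ(ξ) − γ(η)| ≤ γ(ξ − η) + 2√(M·γ(ξ − η)); in particular if γ(ξ − η) = 0 then γ(ξ) = γ(η). -/

import Mathlib

open Finset Real

def IsVariogram {d : ℕ} (γ : (Fin d → ℝ) → ℝ) : Prop :=
  γ 0 = 0 ∧ (∀ ξ, γ (-ξ) = γ ξ) ∧
  ∀ (n : ℕ) (x : Fin n → (Fin d → ℝ)) (c : Fin n → ℝ),
    (∑ i, c i) = 0 → (∑ i, ∑ j, c i * c j * γ (x i - x j)) ≤ 0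

def IsPosDef {d : ℕ} (f : (Fin d → ℝ) → ℝ) : Prop :=
  ∀ (n : ℕ) (x : Fin n → (Fin d → ℝ)) (c : Fin n → ℝ),
    0 ≤ ∑ i, ∑ j, c i * c j * f (x i - x j)

def IsPosDef1 (f : ℝ → ℝ) : Prop :=
  ∀ (n : ℕ) (x : Fin n → ℝ) (c : Fin n → ℝ),
    0 ≤ ∑ i, ∑ j, c i * c j * f (x i - x j)

def IsVariogram1 (γ : ℝ → ℝ) : Prop :=
  γ 0 = 0 ∧ (∀ x, γ (-x) = γ x) ∧
  ∀ (n : ℕ) (x : Fin n → ℝ) (c : Fin n → ℝ),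
    (∑ i, c i) = 0 → (∑ i, ∑ j, c i * c j * γ (x i - x j)) ≤ 0

noncomputable def ind {d : ℕ} : (Fin d → ℝ) → ℝ := fun ξ => if ξ = 0 then 0 else 1

lemma vario_nonneg {d : ℕ} (γ : (Fin d → ℝ) → ℝ) (h : IsVariogram γ) (ξ : Fin d → ℝ) :
    0 ≤ γ ξ := by
  obtain ⟨h0, hs, hc⟩ := h
  have := hc 2 ![ξ, 0] ![1, -1] (by simp)
  simp [Fin.sum_univ_two, h0] at this
  nlinarith [this, hs ξ]

lemma vario_quad {d : ℕ} (γ : (Fin d → ℝ) → ℝ) (h : IsVariogram γ) (x y : Fin d → ℝ)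
    (t : ℝ) : 0 ≤ γ x * (t * t) + (γ x + γ y - γ (x - y)) * t + γ y := by
  obtain ⟨h0, hs, hc⟩ := h
  have := hc 3 ![x, y, 0] ![t, 1, -(t + 1)] (by simp [Fin.sum_univ_three])
  simp [Fin.sum_univ_three, h0] at this
  have e5 : γ (y - x) = γ (x - y) := by
    have : y - x = -(x - y) := by ring
    rw [this, hs]
  rw [hs x, hs y, e5] at this
  nlinarith [this]

lemma vario_cs {d : ℕ} (γ : (Fin d → ℝ) → ℝ) (h : IsVariogram γ) (x y : Fin d → ℝ) :
    (γ x + γ y - γ (x - y)) ^ 2 ≤ 4 * γ x * γ y := by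
  have hq := vario_quad γ h x y
  have := discrim_le_zero (a := γ x) (b := γ x + γ y - γ (x - y)) (c := γ y) hq
  simp only [discrim] at this
  nlinarith [this]

theorem stmt16 {d : ℕ} (γ : (Fin d → ℝ) → ℝ) (h : IsVariogram γ)
    (M : ℝ) (hM : ∀ ξ, γ ξ ≤ M) (ξ η : Fin d → ℝ) :
    |γ ξ - γ η| ≤ γ (ξ - η) + 2 * Real.sqrt (M * γ (ξ - η)) ∧
    (γ (ξ - η) = 0 → γ ξ = γ η) := by
  have hswap : γ (η - ξ) = γ (ξ - η) := by
    have : η - ξ = -(ξ - η) := by ring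
    rw [this, h.2.1]
  have hg : 0 ≤ γ (ξ - η) := vario_nonneg γ h _
  have hξ : 0 ≤ γ ξ := vario_nonneg γ h _
  have hη : 0 ≤ γ η := vario_nonneg γ h _
  have hMξ : γ ξ ≤ M := hM ξ
  have hMη : γ η ≤ M := hM η
  -- K = γ ξ + γ (ξ-η) - γ η ; note ξ - (ξ - η) = η
  have k1 : (γ ξ + γ (ξ - η) - γ η) ^ 2 ≤ 4 * γ ξ * γ (ξ - η) := by
    have := vario_cs γ h ξ (ξ - η)
    have e : ξ - (ξ - η) = η := by ring
    rwa [e] at this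
  have k2 : (γ η + γ (ξ - η) - γ ξ) ^ 2 ≤ 4 * γ η * γ (ξ - η) := by
    have := vario_cs γ h η (η - ξ)
    have e : η - (η - ξ) = ξ := by ring
    rw [e, hswap] at this
    linarith
  set s := Real.sqrt (M * γ (ξ - η)) with hs
  have hs0 : 0 ≤ s := Real.sqrt_nonneg _
  have hs2 : s ^ 2 = M * γ (ξ - η) := Real.sq_sqrt (mul_nonneg (le_trans hg (hM _)) hg)
  constructor
  · rw [abs_le]
    constructor
    · nlinarith [k2, hs2, hs0, hg]
    · nlinarith [k1, hs2, hs0, hg]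
  · intro h0
    rw [h0] at k1 k2
    nlinarith [k1, k2]
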